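/- Let G be the link of pairwise disjoint connected graphs G_1, …, G_n with respect to vertices x_i, y_i ∈ V(G_i): G is obtained by joining y_i to x_{i+1} by a new edge for i = 1, …, n−1. Then Mo(G) ≤ Σ_{i=1}^{n} Mo(G_i) + Σ_{i=1}^{n} |E(G_i)|·(|V(G)| − |V(G_i)|) + Σ_{i=1}^{n−1} | Σ_{t=1}^{i} |V(G_t)| − Σ_{t=i+1}^{n} |V(G_t)| |. -/

import Mathlib

open Finset

section MostarDefs

variable {V : Type*}

/-- Number of vertices of `G` strictly closer to `u` than to `v`. -/
noncomputable def closerCount (G : SimpleGraph V) (u v : V) : ℕ :=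
  Nat.card {w : V // G.dist w u < G.dist w v}

/-- Contribution `|n_u - n_v|` of an edge, as a symmetric function on `Sym2 V`. -/
noncomputable def mostarTerm (G : SimpleGraph V) : Sym2 V → ℕ :=
  Sym2.lift ⟨fun u v => ((closerCount G u v : ℤ) - closerCount G v u).natAbs,
    fun u v => by dsimp only; omega⟩

/-- The Mostar index of a finite graph. -/
noncomputable def mostar (G : SimpleGraph V) [Finite V] : ℕ :=
  letI := Fintype.ofFinite V
  letI := Classical.decEq V
  letI := Classical.decRel G.Adj
  ∑ e ∈ G.edgeFinset, mostarTerm G e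

/-- Distance from a vertex `w` to an edge, as min over the endpoints. -/
noncomputable def vertexEdgeDist (G : SimpleGraph V) (w : V) : Sym2 V → ℕ :=
  Sym2.lift ⟨fun x y => min (G.dist x w) (G.dist y w), fun _ _ => min_comm _ _⟩

/-- Number of edges of `G` strictly closer to `u` than to `v`. -/
noncomputable def edgeCloserCount (G : SimpleGraph V) (u v : V) : ℕ :=
  Nat.card {e : Sym2 V // e ∈ G.edgeSet ∧ vertexEdgeDist G u e < vertexEdgeDist G v e}

/-- Contribution `|m_u - m_v|` of an edge, as a symmetric function on `Sym2 V`. -/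
noncomputable def emostarTerm (G : SimpleGraph V) : Sym2 V → ℕ :=
  Sym2.lift ⟨fun u v => ((edgeCloserCount G u v : ℤ) - edgeCloserCount G v u).natAbs,
    fun u v => by dsimp only; omega⟩

/-- The edge Mostar index of a finite graph. -/
noncomputable def emostar (G : SimpleGraph V) [Finite V] : ℕ :=
  letI := Fintype.ofFinite V
  letI := Classical.decEq V
  letI := Classical.decRel G.Adj
  ∑ e ∈ G.edgeFinset, emostarTerm G e

end MostarDefs

/-- The link of the graphs `G 0, …, G (n-1)` with respect to the vertices `x i, y i`:
the disjoint union of the `G i` together with the new edges `y i — x (i+1)`. -/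
def linkGraph (n : ℕ) (V : ℕ → Type*) (G : ∀ i, SimpleGraph (V i)) (x y : ∀ i, V i) :
    SimpleGraph ((i : Fin n) × V i.val) where
  Adj p q :=
    (∃ (i : Fin n) (a b : V i.val), (G i.val).Adj a b ∧ p = ⟨i, a⟩ ∧ q = ⟨i, b⟩) ∨
    (∃ (i j : Fin n), j.val = i.val + 1 ∧
      ((p = ⟨i, y i.val⟩ ∧ q = ⟨j, x j.val⟩) ∨ (p = ⟨j, x j.val⟩ ∧ q = ⟨i, y i.val⟩)))
  symm := by
    constructor
    rintro p q (⟨i, a, b, h, rfl, rfl⟩ | ⟨i, j, hj, (⟨rfl, rfl⟩ | ⟨rfl, rfl⟩)⟩)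
    · exact Or.inl ⟨i, b, a, h.symm, rfl, rfl⟩
    · exact Or.inr ⟨i, j, hj, Or.inr ⟨rfl, rfl⟩⟩
    · exact Or.inr ⟨i, j, hj, Or.inl ⟨rfl, rfl⟩⟩
  loopless := by
    constructor
    rintro p (⟨i, a, b, h, rfl, hab⟩ | ⟨i, j, hj, (⟨rfl, hab⟩ | ⟨rfl, hab⟩)⟩)
    · obtain ⟨rfl⟩ : a = b := by simpa using hab
      exact (G i.val).irrefl h
    · have : i = j := congrArg Sigma.fst hab
      omega
    · have : j = i := congrArg Sigma.fst hab
      omega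


namespace MoLink

open SimpleGraph

variable {n : ℕ} {V : ℕ → Type*} {G : ∀ i, SimpleGraph (V i)} {x y : ∀ i, V i}

/-- Inclusion of a fiber into the link graph. -/
def fiberHom (i : Fin n) : G i.val →g linkGraph n V G x y where
  toFun a := ⟨i, a⟩
  map_rel' := fun h => Or.inl ⟨i, _, _, h, rfl, rfl⟩

lemma bridge_adj (ik jk : Fin n) (hjk : jk.val = ik.val + 1) :
    (linkGraph n V G x y).Adj ⟨ik, y ik.val⟩ ⟨jk, x jk.val⟩ :=
  Or.inr ⟨ik, jk, hjk, Or.inl ⟨rfl, rfl⟩⟩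

lemma cross_up (ik jk : Fin n) (hjk : jk.val = ik.val + 1) :
    ∀ {u v : (i : Fin n) × V i.val} (p : (linkGraph n V G x y).Walk u v),
      u.1.val ≤ ik.val → ik.val < v.1.val →
      ∃ (q1 : (linkGraph n V G x y).Walk u ⟨ik, y ik.val⟩)
        (q2 : (linkGraph n V G x y).Walk ⟨jk, x jk.val⟩ v),
        q1.length + 1 + q2.length ≤ p.length := by
  intro u v p
  induction p with
  | nil => intro hu hv; omega
  | @cons u w v h p ih =>
    intro hu hv
    by_cases hw : w.1.val ≤ ik.val
    · obtain ⟨q1, q2, hq⟩ := ih hw hv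
      exact ⟨SimpleGraph.Walk.cons h q1, q2, by
        simp only [SimpleGraph.Walk.length_cons]; omega⟩
    · push_neg at hw
      rcases h with ⟨i, a, b, hab, h1, h2⟩ | ⟨i, j, hij, ⟨h1, h2⟩ | ⟨h1, h2⟩⟩
      · exfalso
        have e1 : u.1.val = i.val := by rw [h1]
        have e2 : w.1.val = i.val := by rw [h2]
        omega
      · have e1 : u.1.val = i.val := by rw [h1]
        have e2 : w.1.val = j.val := by rw [h2]
        have hi : i = ik := Fin.ext (by omega)
        have hj : j = jk := Fin.ext (by omega)
        subst hi; subst hj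
        subst h1; subst h2
        exact ⟨SimpleGraph.Walk.nil, p, by
          show 0 + 1 + p.length ≤ p.length + 1; omega⟩
      · exfalso
        have e1 : u.1.val = j.val := by rw [h1]
        have e2 : w.1.val = i.val := by rw [h2]
        omega

lemma cross_down (ik jk : Fin n) (hjk : jk.val = ik.val + 1)
    {u v : (i : Fin n) × V i.val} (p : (linkGraph n V G x y).Walk u v)
    (hu : ik.val < u.1.val) (hv : v.1.val ≤ ik.val) :
    ∃ (q1 : (linkGraph n V G x y).Walk u ⟨jk, x jk.val⟩)
      (q2 : (linkGraph n V G x y).Walk ⟨ik, y ik.val⟩ v),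
      q1.length + 1 + q2.length ≤ p.length := by
  obtain ⟨q1, q2, hq⟩ := cross_up ik jk hjk p.reverse hv hu
  refine ⟨q2.reverse, q1.reverse, ?_⟩
  simp only [SimpleGraph.Walk.length_reverse] at hq ⊢
  omega

lemma link_connected (hn : 1 ≤ n) (hconn : ∀ i < n, (G i).Connected) :
    (linkGraph n V G x y).Connected := by
  have fib : ∀ (i : Fin n) (a b : V i.val),
      (linkGraph n V G x y).Reachable ⟨i, a⟩ ⟨i, b⟩ := fun i a b =>
    SimpleGraph.Reachable.map (fiberHom i) ((hconn i.val i.isLt).preconnected a b)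
  have base : ∀ (k : ℕ) (hk : k < n),
      (linkGraph n V G x y).Reachable ⟨⟨0, hn⟩, x 0⟩ ⟨⟨k, hk⟩, x k⟩ := by
    intro k
    induction k with
    | zero => intro hk; exact SimpleGraph.Reachable.refl _
    | succ k ih =>
      intro hk
      have hk' : k < n := by omega
      refine ((ih hk').trans (fib ⟨k, hk'⟩ (x k) (y k))).trans ?_
      exact SimpleGraph.Adj.reachable (bridge_adj ⟨k, hk'⟩ ⟨k + 1, hk⟩ rfl)
  rw [SimpleGraph.connected_iff_exists_forall_reachable]
  refine ⟨⟨⟨0, hn⟩, x 0⟩, ?_⟩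
  rintro ⟨j, b⟩
  exact (base j.val j.isLt).trans (fib j (x j.val) b)

lemma dist_bridge_low (hL : (linkGraph n V G x y).Connected)
    (ik jk : Fin n) (hjk : jk.val = ik.val + 1)
    (w : (i : Fin n) × V i.val) (hw : w.1.val ≤ ik.val) :
    (linkGraph n V G x y).dist w ⟨jk, x jk.val⟩
      = (linkGraph n V G x y).dist w ⟨ik, y ik.val⟩ + 1 := by
  have hadj := bridge_adj (G := G) (x := x) (y := y) ik jk hjk
  have h1 : (linkGraph n V G x y).dist w ⟨jk, x jk.val⟩
      ≤ (linkGraph n V G x y).dist w ⟨ik, y ik.val⟩ + 1 := by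
    have htri := hL.dist_triangle (u := w) (v := ⟨ik, y ik.val⟩) (w := ⟨jk, x jk.val⟩)
    have hd1 : (linkGraph n V G x y).dist ⟨ik, y ik.val⟩ ⟨jk, x jk.val⟩ ≤ 1 := by
      simpa using SimpleGraph.dist_le hadj.toWalk
    omega
  have h2 : (linkGraph n V G x y).dist w ⟨ik, y ik.val⟩ + 1
      ≤ (linkGraph n V G x y).dist w ⟨jk, x jk.val⟩ := by
    obtain ⟨p, hp⟩ := hL.exists_walk_length_eq_dist w ⟨jk, x jk.val⟩
    obtain ⟨q1, q2, hq⟩ := cross_up ik jk hjk p hw (by show ik.val < jk.val; omega)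
    have := SimpleGraph.dist_le q1
    omega
  omega

lemma dist_bridge_high (hL : (linkGraph n V G x y).Connected)
    (ik jk : Fin n) (hjk : jk.val = ik.val + 1)
    (w : (i : Fin n) × V i.val) (hw : ik.val < w.1.val) :
    (linkGraph n V G x y).dist w ⟨ik, y ik.val⟩
      = (linkGraph n V G x y).dist w ⟨jk, x jk.val⟩ + 1 := by
  have hadj := bridge_adj (G := G) (x := x) (y := y) ik jk hjk
  have h1 : (linkGraph n V G x y).dist w ⟨ik, y ik.val⟩
      ≤ (linkGraph n V G x y).dist w ⟨jk, x jk.val⟩ + 1 := by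
    have htri := hL.dist_triangle (u := w) (v := ⟨jk, x jk.val⟩) (w := ⟨ik, y ik.val⟩)
    have hd1 : (linkGraph n V G x y).dist ⟨jk, x jk.val⟩ ⟨ik, y ik.val⟩ ≤ 1 := by
      simpa using SimpleGraph.dist_le hadj.symm.toWalk
    omega
  have h2 : (linkGraph n V G x y).dist w ⟨jk, x jk.val⟩ + 1
      ≤ (linkGraph n V G x y).dist w ⟨ik, y ik.val⟩ := by
    obtain ⟨p, hp⟩ := hL.exists_walk_length_eq_dist w ⟨ik, y ik.val⟩
    obtain ⟨q1, q2, hq⟩ := cross_down ik jk hjk p hw (by show ik.val ≤ ik.val; omega)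
    have := SimpleGraph.dist_le q1
    omega
  omega

lemma closer_bridge_iff (hL : (linkGraph n V G x y).Connected)
    (ik jk : Fin n) (hjk : jk.val = ik.val + 1) (w : (i : Fin n) × V i.val) :
    ((linkGraph n V G x y).dist w ⟨ik, y ik.val⟩
      < (linkGraph n V G x y).dist w ⟨jk, x jk.val⟩ ↔ w.1.val ≤ ik.val) ∧
    ((linkGraph n V G x y).dist w ⟨jk, x jk.val⟩
      < (linkGraph n V G x y).dist w ⟨ik, y ik.val⟩ ↔ ik.val < w.1.val) := by
  by_cases hw : w.1.val ≤ ik.val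
  · have := dist_bridge_low hL ik jk hjk w hw
    constructor <;> constructor <;> intro h <;> omega
  · push_neg at hw
    have := dist_bridge_high hL ik jk hjk w hw
    constructor <;> constructor <;> intro h <;> omega

end MoLink

namespace MoLink

variable {n : ℕ} {V : ℕ → Type*} {G : ∀ i, SimpleGraph (V i)} {x y : ∀ i, V i}

lemma card_level [∀ i, Finite (V i)] (P : ℕ → Prop) [DecidablePred P] :
    Nat.card {w : (i : Fin n) × V i.val // P w.1.val}
      = ∑ t ∈ Finset.range n with P t, Nat.card (V t) := by
  classical
  letI : ∀ i, Fintype (V i) := fun i => Fintype.ofFinite _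
  letI : Fintype {w : (i : Fin n) × V i.val // P w.1.val} := Fintype.ofFinite _
  rw [Nat.card_eq_fintype_card]
  rw [Fintype.card_congr (Equiv.subtypeSigmaEquiv (fun i : Fin n => V i.val)
    (fun i => P i.val))]
  rw [Fintype.card_sigma]
  have h1 : ∑ i : {i : Fin n // P i.val}, Fintype.card (V i.val.val)
      = ∑ i ∈ Finset.univ.filter (fun i : Fin n => P i.val), Fintype.card (V i.val) := by
    exact (Finset.sum_subtype (Finset.univ.filter (fun i : Fin n => P i.val))
      (fun i => by simp) (fun i : Fin n => Fintype.card (V i.val))).symm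
  rw [h1, Finset.sum_filter, Fin.sum_univ_eq_sum_range
    (fun t => if P t then Fintype.card (V t) else 0) n, ← Finset.sum_filter]
  simp [Nat.card_eq_fintype_card]

lemma card_level_le [∀ i, Finite (V i)] (k : ℕ) (hk : k < n) :
    Nat.card {w : (i : Fin n) × V i.val // w.1.val ≤ k}
      = ∑ t ∈ Finset.range (k + 1), Nat.card (V t) := by
  classical
  rw [card_level (fun t => t ≤ k)]
  congr 1
  ext t
  simp only [Finset.mem_filter, Finset.mem_range]
  omega

lemma card_level_gt [∀ i, Finite (V i)] (k : ℕ) :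
    Nat.card {w : (i : Fin n) × V i.val // k < w.1.val}
      = ∑ t ∈ Finset.Ico (k + 1) n, Nat.card (V t) := by
  classical
  rw [card_level (fun t => k < t)]
  congr 1
  ext t
  simp only [Finset.mem_filter, Finset.mem_range, Finset.mem_Ico]
  omega

lemma closerCount_bridge_low [∀ i, Finite (V i)] (hL : (linkGraph n V G x y).Connected)
    (ik jk : Fin n) (hjk : jk.val = ik.val + 1) :
    closerCount (linkGraph n V G x y) ⟨ik, y ik.val⟩ ⟨jk, x jk.val⟩
      = ∑ t ∈ Finset.range (ik.val + 1), Nat.card (V t) := by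
  classical
  rw [closerCount,
    Nat.card_congr (Equiv.subtypeEquivRight (fun w => (closer_bridge_iff hL ik jk hjk w).1))]
  exact card_level_le ik.val ik.isLt

lemma closerCount_bridge_high [∀ i, Finite (V i)] (hL : (linkGraph n V G x y).Connected)
    (ik jk : Fin n) (hjk : jk.val = ik.val + 1) :
    closerCount (linkGraph n V G x y) ⟨jk, x jk.val⟩ ⟨ik, y ik.val⟩
      = ∑ t ∈ Finset.Ico (ik.val + 1) n, Nat.card (V t) := by
  classical
  rw [closerCount,
    Nat.card_congr (Equiv.subtypeEquivRight (fun w => (closer_bridge_iff hL ik jk hjk w).2))]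
  exact card_level_gt ik.val

lemma mostarTerm_bridge [∀ i, Finite (V i)] (hL : (linkGraph n V G x y).Connected)
    (ik jk : Fin n) (hjk : jk.val = ik.val + 1) :
    mostarTerm (linkGraph n V G x y) s(⟨ik, y ik.val⟩, ⟨jk, x jk.val⟩)
      = ((∑ t ∈ Finset.range (ik.val + 1), (Nat.card (V t) : ℤ))
          - ∑ t ∈ Finset.Ico (ik.val + 1) n, (Nat.card (V t) : ℤ)).natAbs := by
  have h0 : mostarTerm (linkGraph n V G x y) s(⟨ik, y ik.val⟩, ⟨jk, x jk.val⟩)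
      = ((closerCount (linkGraph n V G x y) ⟨ik, y ik.val⟩ ⟨jk, x jk.val⟩ : ℤ)
          - closerCount (linkGraph n V G x y) ⟨jk, x jk.val⟩ ⟨ik, y ik.val⟩).natAbs := rfl
  rw [h0, closerCount_bridge_low hL ik jk hjk, closerCount_bridge_high hL ik jk hjk]
  push_cast
  rfl

end MoLink

namespace MoLink

variable {n : ℕ} {V : ℕ → Type*} {G : ∀ i, SimpleGraph (V i)} {x y : ∀ i, V i}

lemma walk_fiber_ge (hconn : ∀ i < n, (G i).Connected) :
    ∀ (m : ℕ) (u v : (i : Fin n) × V i.val) (p : (linkGraph n V G x y).Walk u v),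
      p.length ≤ m → ∀ (i : Fin n) (a b : V i.val), u = ⟨i, a⟩ → v = ⟨i, b⟩ →
      (G i.val).dist a b ≤ p.length := by
  intro m
  induction m with
  | zero =>
    intro u v p hp i a b hu hv
    have huv : u = v := p.eq_of_length_eq_zero (by omega)
    rw [hu, hv] at huv
    have hi : a = b := by simpa using huv
    subst hi
    simp [SimpleGraph.dist_self]
  | succ m ih =>
    intro u v p hp i a b hu hv
    cases p with
    | nil =>
      rw [hu] at hv
      have hab : b = a := by simpa using hv.symm
      subst hab
      simp [SimpleGraph.dist_self]
    | cons h q =>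
      subst hu; subst hv
      simp only [SimpleGraph.Walk.length_cons] at hp
      rcases h with ⟨i', a', b', hab, h1, h2⟩ | ⟨i', j', hij, ⟨h1, h2⟩ | ⟨h1, h2⟩⟩
      · -- internal step
        have hi : i = i' := congrArg Sigma.fst h1
        subst hi
        have ha : a = a' := by simpa using h1
        subst ha; subst h2
        have hq : q.length ≤ m := by omega
        have hd := ih _ _ q hq i b' b rfl rfl
        have htri := (hconn i.val i.isLt).dist_triangle (u := a) (v := b') (w := b)
        have h1d : (G i.val).dist a b' ≤ 1 := by
          simpa using SimpleGraph.dist_le hab.toWalk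
        show _ ≤ q.length + 1
        omega
      · -- bridge step, u is the y-side
        have hi : i = i' := congrArg Sigma.fst h1
        subst hi
        have ha : a = y i.val := by simpa using h1
        subst h2
        obtain ⟨q1, q2, hq⟩ := cross_down i j' hij q
          (by show i.val < j'.val; omega) (by show i.val ≤ i.val; omega)
        have hd := ih _ _ q2 (by omega) i (y i.val) b rfl rfl
        subst ha
        show _ ≤ q.length + 1
        omega
      · -- bridge step, u is the x-side
        have hi : i = j' := congrArg Sigma.fst h1
        subst hi
        have ha : a = x i.val := by simpa using h1
        subst h2
        obtain ⟨q1, q2, hq⟩ := cross_up i' i hij q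
          (by show i'.val ≤ i'.val; omega) (by show i'.val < i.val; omega)
        have hd := ih _ _ q2 (by omega) i (x i.val) b rfl rfl
        subst ha
        show _ ≤ q.length + 1
        omega

lemma dist_fiber (hL : (linkGraph n V G x y).Connected) (hconn : ∀ i < n, (G i).Connected)
    (i : Fin n) (a b : V i.val) :
    (linkGraph n V G x y).dist ⟨i, a⟩ ⟨i, b⟩ = (G i.val).dist a b := by
  apply le_antisymm
  · obtain ⟨p, hp⟩ := (hconn i.val i.isLt).exists_walk_length_eq_dist a b
    have := SimpleGraph.dist_le (p.map (fiberHom (G := G) (x := x) (y := y) i))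
    rw [SimpleGraph.Walk.length_map, hp] at this
    exact this
  · obtain ⟨q, hq⟩ := hL.exists_walk_length_eq_dist ⟨i, a⟩ ⟨i, b⟩
    have := walk_fiber_ge hconn q.length _ _ q le_rfl i a b rfl rfl
    omega

end MoLink

namespace MoLink

variable {n : ℕ} {V : ℕ → Type*} {G : ∀ i, SimpleGraph (V i)} {x y : ∀ i, V i}

lemma card_infiber [∀ j, Fintype (V j)] [Fintype ((j : Fin n) × V j.val)]
    [DecidableEq ((j : Fin n) × V j.val)]
    (i : Fin n) (P : ((j : Fin n) × V j.val) → Prop) [DecidablePred P]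
    (Q : V i.val → Prop) [DecidablePred Q] (hPQ : ∀ v : V i.val, P ⟨i, v⟩ ↔ Q v) :
    (Finset.univ.filter (fun w : (j : Fin n) × V j.val => P w ∧ w.1 = i)).card
      = (Finset.univ.filter Q).card := by
  symm
  apply Finset.card_bij (fun (v : V i.val) _ => (⟨i, v⟩ : (j : Fin n) × V j.val))
  · intro v hv
    rw [Finset.mem_filter] at hv ⊢
    exact ⟨Finset.mem_univ _, (hPQ v).mpr hv.2, rfl⟩
  · intro v1 h1 v2 h2 he
    simpa using he
  · rintro ⟨j, u⟩ hw
    simp only [Finset.mem_filter, Finset.mem_univ, true_and] at hw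
    obtain ⟨hw1, rfl⟩ := hw
    exact ⟨u, by simp [(hPQ u).mp hw1], rfl⟩

lemma card_split [Fintype ((j : Fin n) × V j.val)] [DecidableEq ((j : Fin n) × V j.val)]
    (i : Fin n) (P : ((j : Fin n) × V j.val) → Prop) [DecidablePred P] :
    (Finset.univ.filter P).card
      = (Finset.univ.filter (fun w => P w ∧ w.1 = i)).card
        + (Finset.univ.filter (fun w => P w ∧ ¬ w.1 = i)).card := by
  classical
  rw [← Finset.filter_filter, ← Finset.filter_filter,
    Finset.card_filter_add_card_filter_not]

lemma term_internal [∀ j, Finite (V j)] (hL : (linkGraph n V G x y).Connected)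
    (hconn : ∀ i < n, (G i).Connected) (i : Fin n) (a b : V i.val) :
    mostarTerm (linkGraph n V G x y) s(⟨i, a⟩, ⟨i, b⟩)
      ≤ mostarTerm (G i.val) s(a, b)
        + (Nat.card ((j : Fin n) × V j.val) - Nat.card (V i.val)) := by
  classical
  letI : ∀ j, Fintype (V j) := fun j => Fintype.ofFinite _
  letI : Fintype ((j : Fin n) × V j.val) := Fintype.ofFinite _
  set N := Nat.card ((j : Fin n) × V j.val) with hN
  -- closerCount as filter cards
  have hcc : ∀ (W : Type _) (_ : Fintype W) (G' : SimpleGraph W) (u v : W),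
      closerCount G' u v
        = (Finset.univ.filter (fun w => G'.dist w u < G'.dist w v)).card := by
    intro W _ G' u v
    rw [closerCount, Nat.card_eq_fintype_card]
    exact Fintype.card_subtype _
  have key : ∀ (c d : V i.val),
      closerCount (linkGraph n V G x y) ⟨i, c⟩ ⟨i, d⟩
        = closerCount (G i.val) c d
          + (Finset.univ.filter (fun w : (j : Fin n) × V j.val =>
              ((linkGraph n V G x y).dist w ⟨i, c⟩ < (linkGraph n V G x y).dist w ⟨i, d⟩)
                ∧ ¬ w.1 = i)).card := by
    intro c d
    rw [hcc _ _ _ _ _, hcc _ _ (G i.val) c d]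
    rw [card_split i]
    congr 1
    apply card_infiber
    intro v
    rw [dist_fiber hL hconn, dist_fiber hL hconn]
  -- out-of-fiber bound
  have hout : ∀ (S : Finset ((j : Fin n) × V j.val)), (∀ w ∈ S, ¬ w.1 = i) →
      S.card ≤ N - Nat.card (V i.val) := by
    intro S hS
    have hsub : S ⊆ Finset.univ.filter (fun w => ¬ w.1 = i) := by
      intro w hw
      simp only [Finset.mem_filter, Finset.mem_univ, true_and]
      exact hS w hw
    have h2 := Finset.card_filter_add_card_filter_not
      (s := (Finset.univ : Finset ((j : Fin n) × V j.val))) (p := fun w => w.1 = i)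
    have h3' := card_infiber (n := n) (V := V) i (fun _ => True) (fun _ => True)
      (fun v => Iff.rfl)
    have h3 : (Finset.univ.filter (fun w : (j : Fin n) × V j.val => w.1 = i)).card
        = Nat.card (V i.val) := by
      rw [Nat.card_eq_fintype_card]
      have e : (Finset.univ.filter (fun w : (j : Fin n) × V j.val => w.1 = i))
          = (Finset.univ.filter (fun w : (j : Fin n) × V j.val => True ∧ w.1 = i)) := by
        ext w; simp
      rw [e, h3', Finset.filter_true, Finset.card_univ]
    have h4 : Fintype.card ((j : Fin n) × V j.val) = N := (Nat.card_eq_fintype_card).symm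
    have h5 := Finset.card_le_card hsub
    rw [Finset.card_univ] at h2
    omega
  have hA := key a b
  have hB := key b a
  have hA2 : (Finset.univ.filter (fun w : (j : Fin n) × V j.val =>
      ((linkGraph n V G x y).dist w ⟨i, a⟩ < (linkGraph n V G x y).dist w ⟨i, b⟩)
        ∧ ¬ w.1 = i)).card ≤ N - Nat.card (V i.val) :=
    hout _ (fun w hw => (Finset.mem_filter.mp hw).2.2)
  have hB2 : (Finset.univ.filter (fun w : (j : Fin n) × V j.val =>
      ((linkGraph n V G x y).dist w ⟨i, b⟩ < (linkGraph n V G x y).dist w ⟨i, a⟩)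
        ∧ ¬ w.1 = i)).card ≤ N - Nat.card (V i.val) :=
    hout _ (fun w hw => (Finset.mem_filter.mp hw).2.2)
  have e1 : mostarTerm (linkGraph n V G x y) s(⟨i, a⟩, ⟨i, b⟩)
      = ((closerCount (linkGraph n V G x y) ⟨i, a⟩ ⟨i, b⟩ : ℤ)
          - closerCount (linkGraph n V G x y) ⟨i, b⟩ ⟨i, a⟩).natAbs := rfl
  have e2 : mostarTerm (G i.val) s(a, b)
      = ((closerCount (G i.val) a b : ℤ) - closerCount (G i.val) b a).natAbs := rfl
  rw [e1, e2, hA, hB]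
  omega

end MoLink

namespace MoLink

variable {n : ℕ} {V : ℕ → Type*} {G : ∀ i, SimpleGraph (V i)} {x y : ∀ i, V i}

lemma mostar_eq_sum {W : Type*} [Finite W] [Fintype W] [DecidableEq W]
    (G' : SimpleGraph W) [DecidableRel G'.Adj] :
    mostar G' = ∑ e ∈ G'.edgeFinset, mostarTerm G' e := by
  rw [mostar]
  apply Finset.sum_congr _ (fun _ _ => rfl)
  ext e
  simp [SimpleGraph.mem_edgeFinset]

lemma nat_sum_union_le {α : Type*} [DecidableEq α] (s t : Finset α) (f : α → ℕ) :
    ∑ e ∈ s ∪ t, f e ≤ ∑ e ∈ s, f e + ∑ e ∈ t, f e := by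
  rw [← Finset.sum_union_inter]
  omega

lemma nat_sum_biUnion_le {ι β : Type*} [DecidableEq β] (s : Finset ι) (t : ι → Finset β)
    (f : β → ℕ) :
    ∑ e ∈ s.biUnion t, f e ≤ ∑ i ∈ s, ∑ e ∈ t i, f e := by
  classical
  induction s using Finset.induction with
  | empty => simp
  | insert _ _ h ih =>
    rename_i a s
    rw [Finset.biUnion_insert, Finset.sum_insert h]
    exact (nat_sum_union_le _ _ _).trans (by omega)

end MoLink

theorem mostar_linkGraph_le (n : ℕ) (hn : 1 ≤ n) (V : ℕ → Type*) [∀ i, Finite (V i)]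
    (G : ∀ i, SimpleGraph (V i)) (hconn : ∀ i < n, (G i).Connected) (x y : ∀ i, V i) :
    mostar (linkGraph n V G x y) ≤
      (∑ i ∈ range n, mostar (G i)) +
      (∑ i ∈ range n,
        Nat.card (G i).edgeSet * (Nat.card ((i : Fin n) × V i.val) - Nat.card (V i))) +
      ∑ i ∈ range (n - 1),
        ((∑ t ∈ range (i + 1), (Nat.card (V t) : ℤ)) -
          ∑ t ∈ Finset.Ico (i + 1) n, (Nat.card (V t) : ℤ)).natAbs := by
  classical
  letI : ∀ j, Fintype (V j) := fun j => Fintype.ofFinite _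
  letI : Fintype ((j : Fin n) × V j.val) := Fintype.ofFinite _
  have hL : (linkGraph n V G x y).Connected := MoLink.link_connected hn hconn
  set N := Nat.card ((j : Fin n) × V j.val) with hN
  -- the two families of edges
  set Iset : Fin n → Finset (Sym2 ((j : Fin n) × V j.val)) := fun i =>
    (G i.val).edgeFinset.image (Sym2.map (fun a => (⟨i, a⟩ : (j : Fin n) × V j.val)))
    with hIset
  set Bset : Finset (Sym2 ((j : Fin n) × V j.val)) :=
    (Finset.range (n - 1)).attach.image (fun k =>
      s((⟨⟨k.1, by have := Finset.mem_range.mp k.2; omega⟩, y k.1⟩ :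
          (j : Fin n) × V j.val),
        (⟨⟨k.1 + 1, by have := Finset.mem_range.mp k.2; omega⟩, x (k.1 + 1)⟩ :
          (j : Fin n) × V j.val))) with hBset
  -- edge set decomposition (inclusion)
  have hsub : (linkGraph n V G x y).edgeFinset ⊆ Finset.univ.biUnion Iset ∪ Bset := by
    intro e he
    induction e using Sym2.ind with
    | _ u v =>
      rw [SimpleGraph.mem_edgeFinset, SimpleGraph.mem_edgeSet] at he
      rcases he with ⟨i, a, b, hab, h1, h2⟩ | ⟨i, j, hij, ⟨h1, h2⟩ | ⟨h1, h2⟩⟩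
      · subst h1; subst h2
        refine Finset.mem_union_left _ (Finset.mem_biUnion.mpr ⟨i, Finset.mem_univ _, ?_⟩)
        rw [hIset]
        exact Finset.mem_image.mpr ⟨s(a, b), SimpleGraph.mem_edgeFinset.mpr hab,
          Sym2.map_pair_eq _ _ _⟩
      · subst h1; subst h2
        refine Finset.mem_union_right _ ?_
        rw [hBset]
        apply Finset.mem_image.mpr
        have hilt : i.val < n - 1 := by have := j.isLt; omega
        refine ⟨⟨i.val, Finset.mem_range.mpr hilt⟩, Finset.mem_attach _ _, ?_⟩
        obtain ⟨jv, hjlt⟩ := j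
        simp only at hij
        subst hij
        rfl
      · subst h1; subst h2
        refine Finset.mem_union_right _ ?_
        rw [hBset]
        apply Finset.mem_image.mpr
        have hilt : i.val < n - 1 := by have := j.isLt; omega
        refine ⟨⟨i.val, Finset.mem_range.mpr hilt⟩, Finset.mem_attach _ _, ?_⟩
        obtain ⟨jv, hjlt⟩ := j
        simp only at hij
        subst hij
        rw [Sym2.eq_swap]
  -- bound for each internal family
  have hIbound : ∀ i : Fin n,
      ∑ e ∈ Iset i, mostarTerm (linkGraph n V G x y) e
        ≤ mostar (G i.val) + Nat.card (G i.val).edgeSet * (N - Nat.card (V i.val)) := by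
    intro i
    rw [hIset]
    rw [Finset.sum_image (fun e1 _ e2 _ h => Sym2.map.injective sigma_mk_injective h)]
    have hle : ∀ e ∈ (G i.val).edgeFinset,
        mostarTerm (linkGraph n V G x y)
            (Sym2.map (fun a => (⟨i, a⟩ : (j : Fin n) × V j.val)) e)
          ≤ mostarTerm (G i.val) e + (N - Nat.card (V i.val)) := by
      intro e _
      induction e using Sym2.ind with
      | _ a b =>
        rw [Sym2.map_pair_eq]
        exact MoLink.term_internal hL hconn i a b
    calc ∑ e ∈ (G i.val).edgeFinset, mostarTerm (linkGraph n V G x y)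
            (Sym2.map (fun a => (⟨i, a⟩ : (j : Fin n) × V j.val)) e)
        ≤ ∑ e ∈ (G i.val).edgeFinset,
            (mostarTerm (G i.val) e + (N - Nat.card (V i.val))) :=
          Finset.sum_le_sum hle
      _ = mostar (G i.val) + Nat.card (G i.val).edgeSet * (N - Nat.card (V i.val)) := by
          rw [Finset.sum_add_distrib, Finset.sum_const, smul_eq_mul,
            MoLink.mostar_eq_sum (G i.val)]
          congr 2
          rw [Nat.card_eq_fintype_card]
          exact SimpleGraph.edgeFinset_card
  -- bridge family
  have hBbound : ∑ e ∈ Bset, mostarTerm (linkGraph n V G x y) e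
      = ∑ i ∈ range (n - 1),
        ((∑ t ∈ range (i + 1), (Nat.card (V t) : ℤ)) -
          ∑ t ∈ Finset.Ico (i + 1) n, (Nat.card (V t) : ℤ)).natAbs := by
    rw [hBset]
    rw [Finset.sum_image ?inj]
    case inj =>
      intro k1 _ k2 _ h
      rcases Sym2.eq_iff.mp h with ⟨e1, e2⟩ | ⟨e1, e2⟩
      · have : k1.1 = k2.1 := by
          have := congrArg (fun z => Sigma.fst z |>.val) e1
          simpa using this
        exact Subtype.ext this
      · exfalso
        have c1 : k1.1 = k2.1 + 1 := by
          have := congrArg (fun z => Sigma.fst z |>.val) e1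
          simpa using this
        have c2 : k1.1 + 1 = k2.1 := by
          have := congrArg (fun z => Sigma.fst z |>.val) e2
          simpa using this
        omega
    have heach : ∀ (k : {t // t ∈ Finset.range (n - 1)}),
        mostarTerm (linkGraph n V G x y)
          (s((⟨⟨k.1, by have := Finset.mem_range.mp k.2; omega⟩, y k.1⟩ :
              (j : Fin n) × V j.val),
            (⟨⟨k.1 + 1, by have := Finset.mem_range.mp k.2; omega⟩, x (k.1 + 1)⟩ :
              (j : Fin n) × V j.val)))
          = ((∑ t ∈ range (k.1 + 1), (Nat.card (V t) : ℤ)) -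
              ∑ t ∈ Finset.Ico (k.1 + 1) n, (Nat.card (V t) : ℤ)).natAbs := by
      intro k
      exact MoLink.mostarTerm_bridge hL
        ⟨k.1, by have := Finset.mem_range.mp k.2; omega⟩
        ⟨k.1 + 1, by have := Finset.mem_range.mp k.2; omega⟩ rfl
    rw [Finset.sum_congr rfl (fun k _ => heach k)]
    exact Finset.sum_attach (Finset.range (n - 1)) (fun i =>
      ((∑ t ∈ range (i + 1), (Nat.card (V t) : ℤ)) -
        ∑ t ∈ Finset.Ico (i + 1) n, (Nat.card (V t) : ℤ)).natAbs)
  -- put everything together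
  calc mostar (linkGraph n V G x y)
      = ∑ e ∈ (linkGraph n V G x y).edgeFinset, mostarTerm (linkGraph n V G x y) e :=
        MoLink.mostar_eq_sum _
    _ ≤ ∑ e ∈ Finset.univ.biUnion Iset ∪ Bset, mostarTerm (linkGraph n V G x y) e :=
        Finset.sum_le_sum_of_subset hsub
    _ ≤ (∑ e ∈ Finset.univ.biUnion Iset, mostarTerm (linkGraph n V G x y) e)
        + ∑ e ∈ Bset, mostarTerm (linkGraph n V G x y) e :=
        MoLink.nat_sum_union_le _ _ _
    _ ≤ (∑ i : Fin n, ∑ e ∈ Iset i, mostarTerm (linkGraph n V G x y) e)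
        + ∑ e ∈ Bset, mostarTerm (linkGraph n V G x y) e := by
        have := MoLink.nat_sum_biUnion_le Finset.univ Iset
          (mostarTerm (linkGraph n V G x y))
        omega
    _ ≤ (∑ i : Fin n, (mostar (G i.val)
          + Nat.card (G i.val).edgeSet * (N - Nat.card (V i.val))))
        + ∑ e ∈ Bset, mostarTerm (linkGraph n V G x y) e := by
        have := Finset.sum_le_sum (fun i (_ : i ∈ Finset.univ) => hIbound i)
        omega
    _ = (∑ i ∈ range n, (mostar (G i)
          + Nat.card (G i).edgeSet * (N - Nat.card (V i))))
        + ∑ e ∈ Bset, mostarTerm (linkGraph n V G x y) e := by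
        rw [Fin.sum_univ_eq_sum_range (fun t => mostar (G t)
          + Nat.card (G t).edgeSet * (N - Nat.card (V t))) n]
    _ = (∑ i ∈ range n, mostar (G i)) +
      (∑ i ∈ range n,
        Nat.card (G i).edgeSet * (Nat.card ((i : Fin n) × V i.val) - Nat.card (V i))) +
      ∑ i ∈ range (n - 1),
        ((∑ t ∈ range (i + 1), (Nat.card (V t) : ℤ)) -
          ∑ t ∈ Finset.Ico (i + 1) n, (Nat.card (V t) : ℤ)).natAbs := by
        rw [hBbound, Finset.sum_add_distrib]
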